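/- Let P be the transition matrix of the Swendsen-Wang dynamics for the q-state ferromagnetic Potts model on a finite graph G, with stationary Gibbs distribution μ. Suppose the joint Edwards-Sokal measure ν satisfies approximate spin/edge factorization with constant C, i.e., Ent_ν(f) ≤ C·(ν[Ent_ν(f|σ)] + ν[Ent_ν(f|A)]) for all nonnegative f on the joint space. Then for all nonnegative functions f on spin configurations, Ent_μ(P f) ≤ (1 − 1/C)·Ent_μ(f). -/

import Mathlib

open scoped Classical BigOperators

noncomputable def ent {Ω : Type*} [Fintype Ω] (π f : Ω → ℝ) : ℝ :=
  (∑ x, π x * f x * Real.log (f x)) - (∑ x, π x * f x) * Real.log (∑ x, π x * f x)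

noncomputable def condMean {Ω α : Type*} [Fintype Ω] (ν : Ω → ℝ) (g : Ω → α)
    (f : Ω → ℝ) (x : Ω) : ℝ :=
  (∑ y, if g y = g x then ν y * f y else 0) / (∑ y, if g y = g x then ν y else 0)

noncomputable def avgCondEnt {Ω α : Type*} [Fintype Ω] (ν : Ω → ℝ) (g : Ω → α)
    (f : Ω → ℝ) : ℝ :=
  ∑ x, ν x * f x * (Real.log (f x) - Real.log (condMean ν g f x))

noncomputable def matMulVec {Ω : Type*} [Fintype Ω] (P : Ω → Ω → ℝ) (f : Ω → ℝ) (x : Ω) : ℝ :=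
  ∑ y, P x y * f y

noncomputable def dirForm {Ω : Type*} [Fintype Ω] (π : Ω → ℝ) (P : Ω → Ω → ℝ)
    (f g : Ω → ℝ) : ℝ :=
  ∑ x, π x * f x * (g x - matMulVec P g x)

noncomputable def stepDist {Ω : Type*} [Fintype Ω] (P : Ω → Ω → ℝ) (ζ : Ω → ℝ) (y : Ω) : ℝ :=
  ∑ x, ζ x * P x y

noncomputable def adjointMat {Ω : Type*} [Fintype Ω] (π : Ω → ℝ) (P : Ω → Ω → ℝ)
    (x y : Ω) : ℝ :=
  π y * P y x / π x

noncomputable def matComp {Ω : Type*} [Fintype Ω] (P Q : Ω → Ω → ℝ) (x y : Ω) : ℝ :=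
  ∑ z, P x z * Q z y

/-- Weight of a joint spin/edge (Edwards–Sokal) configuration: `p^{|A|}(1-p)^{|E|-|A|} 1(A ⊆ M(σ))`
with `p = 1 - e^{-β}`. -/
noncomputable def esWeight {V : Type*} [Fintype V] [DecidableEq V]
    (E : Finset (V × V)) (q : ℕ) (β : ℝ) (z : (V → Fin q) × Finset (V × V)) : ℝ :=
  (1 - Real.exp (-β)) ^ z.2.card * Real.exp (-β) ^ (E.card - z.2.card) *
    (if z.2 ⊆ E.filter (fun e => z.1 e.1 = z.1 e.2) then 1 else 0)

/-- The Edwards–Sokal joint measure. -/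
noncomputable def esMeasure {V : Type*} [Fintype V] [DecidableEq V]
    (E : Finset (V × V)) (q : ℕ) (β : ℝ) (z : (V → Fin q) × Finset (V × V)) : ℝ :=
  esWeight E q β z / ∑ w : (V → Fin q) × Finset (V × V), esWeight E q β w

/-- The ferromagnetic `q`-state Potts Gibbs measure: `μ(σ) ∝ exp(-β |D(σ)|)`. -/
noncomputable def pottsMeasure {V : Type*} [Fintype V] [DecidableEq V]
    (E : Finset (V × V)) (q : ℕ) (β : ℝ) (σ : V → Fin q) : ℝ :=
  Real.exp (-β * ((E.filter (fun e => σ e.1 ≠ σ e.2)).card : ℝ)) /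
    ∑ τ : V → Fin q, Real.exp (-β * ((E.filter (fun e => τ e.1 ≠ τ e.2)).card : ℝ))

/-- Swendsen–Wang transition matrix on spin configurations:
`P(σ,τ) = ∑_A ν(A|σ) ν(τ|A)`. -/
noncomputable def swMatrix {V : Type*} [Fintype V] [DecidableEq V]
    (E : Finset (V × V)) (q : ℕ) (β : ℝ) (σ τ : V → Fin q) : ℝ :=
  ∑ A : Finset (V × V),
    (esMeasure E q β (σ, A) / ∑ B : Finset (V × V), esMeasure E q β (σ, B)) *
    (esMeasure E q β (τ, A) / ∑ ρ : V → Fin q, esMeasure E q β (ρ, A))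

section Abstract
variable {Ω α : Type*} [Fintype Ω] (ν : Ω → ℝ) (g : Ω → α) (f : Ω → ℝ)

lemma condMean_nonneg (hν : ∀ x, 0 ≤ ν x) (hf : ∀ x, 0 ≤ f x) (x : Ω) :
    0 ≤ condMean ν g f x := by
  apply div_nonneg <;> apply Finset.sum_nonneg <;> intro y _ <;> split_ifs <;>
    first | positivity | exact mul_nonneg (hν y) (hf y) | exact hν y

lemma condMean_congr {x y : Ω} (h : g x = g y) :
    condMean ν g f x = condMean ν g f y := by
  simp only [condMean, h]

lemma key_sum (hν : ∀ x, 0 ≤ ν x) (φ : Ω → ℝ) (hφ : ∀ x y, g x = g y → φ x = φ y) :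
    ∑ x, ν x * condMean ν g f x * φ x = ∑ x, ν x * f x * φ x := by
  classical
  have hmaps : ∀ x ∈ Finset.univ, g x ∈ Finset.univ.image g := fun x _ =>
    Finset.mem_image_of_mem g (Finset.mem_univ x)
  rw [← Finset.sum_fiberwise_of_maps_to hmaps (fun x => ν x * condMean ν g f x * φ x),
      ← Finset.sum_fiberwise_of_maps_to hmaps (fun x => ν x * f x * φ x)]
  refine Finset.sum_congr rfl fun c hc => ?_
  obtain ⟨x₀, _, hx₀⟩ := Finset.mem_image.1 hc
  set s := Finset.univ.filter (fun x => g x = c) with hs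
  have hmem : ∀ x ∈ s, g x = c := fun x hx => (Finset.mem_filter.1 hx).2
  set D := ∑ y, if g y = c then ν y else 0 with hD
  set N := ∑ y, if g y = c then ν y * f y else 0 with hN
  have hDs : D = ∑ x ∈ s, ν x := by rw [hD, hs, Finset.sum_filter]
  have hNs : N = ∑ x ∈ s, ν x * f x := by rw [hN, hs, Finset.sum_filter]
  have hcm : ∀ x ∈ s, condMean ν g f x = N / D := by
    intro x hx; simp only [condMean, hmem x hx, hD, hN]
  have hphi : ∀ x ∈ s, φ x = φ x₀ := fun x hx => hφ x x₀ ((hmem x hx).trans hx₀.symm)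
  rcases eq_or_ne D 0 with h0 | h0
  · have hz : ∀ x ∈ s, ν x = 0 := by
      intro x hx
      have := (Finset.sum_eq_zero_iff_of_nonneg (fun y _ => hν y)).1 (hDs ▸ h0)
      exact this x hx
    rw [Finset.sum_eq_zero fun x hx => by rw [hz x hx]; ring,
        Finset.sum_eq_zero fun x hx => by rw [hz x hx]; ring]
  · calc ∑ x ∈ s, ν x * condMean ν g f x * φ x
        = ∑ x ∈ s, ν x * (N / D * φ x₀) := by
          refine Finset.sum_congr rfl fun x hx => ?_
          rw [hcm x hx, hphi x hx, mul_assoc]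
      _ = D * (N / D * φ x₀) := by rw [← Finset.sum_mul, hDs]
      _ = N * φ x₀ := by field_simp
      _ = ∑ x ∈ s, ν x * f x * φ x := by
          rw [hNs, Finset.sum_mul]
          exact Finset.sum_congr rfl fun x hx => by rw [hphi x hx]

lemma avgCondEnt_nonneg (hν : ∀ x, 0 ≤ ν x) (hf : ∀ x, 0 ≤ f x) :
    0 ≤ avgCondEnt ν g f := by
  have hkey := key_sum ν g f hν (fun _ => 1) (fun _ _ _ => rfl)
  simp only [mul_one] at hkey
  have hterm : ∀ x ∈ Finset.univ,
      ν x * f x - ν x * condMean ν g f x ≤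
        ν x * f x * (Real.log (f x) - Real.log (condMean ν g f x)) := by
    intro x _
    set m := condMean ν g f x with hm
    have hm0 : 0 ≤ m := condMean_nonneg ν g f hν hf x
    rcases eq_or_lt_of_le (hν x) with ha | ha
    · rw [← ha]; ring_nf; exact le_refl _
    rcases eq_or_lt_of_le (hf x) with ht | ht
    · rw [← ht]; simp; positivity
    · -- ν x > 0, f x > 0 ⇒ m > 0
      have hDge : ν x ≤ ∑ y, if g y = g x then ν y else 0 := by
        have := Finset.single_le_sum (f := fun y => if g y = g x then ν y else 0)
          (fun y _ => by beta_reduce; split_ifs; exacts [hν y, le_refl 0]) (Finset.mem_univ x)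
        simpa using this
      have hNge : ν x * f x ≤ ∑ y, if g y = g x then ν y * f y else 0 := by
        have := Finset.single_le_sum (f := fun y => if g y = g x then ν y * f y else 0)
          (fun y _ => by beta_reduce; split_ifs; exacts [mul_nonneg (hν y) (hf y), le_refl 0])
          (Finset.mem_univ x)
        simpa using this
      have hmpos : 0 < m := by
        rw [hm, condMean]
        exact div_pos (lt_of_lt_of_le (mul_pos ha ht) hNge) (lt_of_lt_of_le ha hDge)
      have hlog : Real.log (m / f x) ≤ m / f x - 1 :=
        Real.log_le_sub_one_of_pos (div_pos hmpos ht)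
      rw [Real.log_div (ne_of_gt hmpos) (ne_of_gt ht)] at hlog
      have h2 : 1 - m / f x ≤ Real.log (f x) - Real.log m := by linarith
      have h3 := mul_le_mul_of_nonneg_left h2 (le_of_lt (mul_pos ha ht))
      calc ν x * f x - ν x * m = ν x * f x * (1 - m / f x) := by field_simp
        _ ≤ ν x * f x * (Real.log (f x) - Real.log m) := h3
  have := Finset.sum_le_sum hterm
  rw [Finset.sum_sub_distrib] at this
  unfold avgCondEnt
  linarith

lemma ent_chain (hν : ∀ x, 0 ≤ ν x) :
    ent ν f = avgCondEnt ν g f + ent ν (condMean ν g f) := by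
  have h1 := key_sum ν g f hν (fun _ => 1) (fun _ _ _ => rfl)
  simp only [mul_one] at h1
  have h2 := key_sum ν g f hν (fun x => Real.log (condMean ν g f x))
    (fun x y h => by rw [condMean_congr ν g f h])
  have h3 : avgCondEnt ν g f =
      (∑ x, ν x * f x * Real.log (f x)) - ∑ x, ν x * f x * Real.log (condMean ν g f x) := by
    unfold avgCondEnt
    rw [← Finset.sum_sub_distrib]
    exact Finset.sum_congr rfl fun x _ => by ring
  unfold ent
  rw [h1, h2, h3]
  ring

lemma ent_condMean_le (hν : ∀ x, 0 ≤ ν x) (hf : ∀ x, 0 ≤ f x) :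
    ent ν (condMean ν g f) ≤ ent ν f := by
  have := ent_chain ν g f hν
  have := avgCondEnt_nonneg ν g f hν hf
  linarith

end Abstract


section App
variable {V : Type*} [Fintype V] [DecidableEq V] (E : Finset (V × V)) (q : ℕ) (β : ℝ)

lemma esWeight_nonneg (hβ : 0 < β) (z : (V → Fin q) × Finset (V × V)) :
    0 ≤ esWeight E q β z := by
  have h1 : Real.exp (-β) ≤ 1 := Real.exp_le_one_iff.2 (by linarith)
  unfold esWeight
  apply mul_nonneg (mul_nonneg (pow_nonneg (by linarith) _) (pow_nonneg (Real.exp_pos _).le _))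
  split_ifs <;> norm_num

lemma esMeasure_nonneg (hβ : 0 < β) (z : (V → Fin q) × Finset (V × V)) :
    0 ≤ esMeasure E q β z :=
  div_nonneg (esWeight_nonneg E q β hβ z)
    (Finset.sum_nonneg fun w _ => esWeight_nonneg E q β hβ w)

lemma esWeight_marginal (σ : V → Fin q) :
    ∑ A : Finset (V × V), esWeight E q β (σ, A) =
      Real.exp (-β * ((E.filter (fun e => σ e.1 ≠ σ e.2)).card : ℝ)) := by
  classical
  set r := Real.exp (-β) with hr
  set p := 1 - r with hp
  set M := E.filter (fun e => σ e.1 = σ e.2) with hM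
  have hME : M ⊆ E := Finset.filter_subset _ _
  have hcard : M.card + (E.filter (fun e => σ e.1 ≠ σ e.2)).card = E.card := by
    rw [hM]
    exact Finset.card_filter_add_card_filter_not _
  have step1 : ∑ A : Finset (V × V), esWeight E q β (σ, A) =
      ∑ A ∈ M.powerset, p ^ A.card * r ^ (E.card - A.card) := by
    rw [← Finset.sum_filter_add_sum_filter_not Finset.univ (fun A => A ⊆ M)]
    have h2 : ∑ A ∈ Finset.univ.filter (fun A => ¬ A ⊆ M), esWeight E q β (σ, A) = 0 := by
      apply Finset.sum_eq_zero; intro A hA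
      have := (Finset.mem_filter.1 hA).2
      simp [esWeight, hM] at this ⊢
      intro h; exact absurd h this
    rw [h2, add_zero]
    have h3 : Finset.univ.filter (fun A => A ⊆ M) = M.powerset := by
      ext A; simp [Finset.mem_powerset]
    rw [h3]
    apply Finset.sum_congr rfl; intro A hA
    have : A ⊆ M := Finset.mem_powerset.1 hA
    simp [esWeight, hM.symm ▸ this, hp, hr]
  have step2 : ∑ A ∈ M.powerset, p ^ A.card * r ^ (E.card - A.card) =
      (∑ A ∈ M.powerset, p ^ A.card * r ^ (M.card - A.card)) * r ^ (E.card - M.card) := by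
    rw [Finset.sum_mul]
    apply Finset.sum_congr rfl; intro A hA
    have hA' : A ⊆ M := Finset.mem_powerset.1 hA
    have h1 : A.card ≤ M.card := Finset.card_le_card hA'
    have h2 : M.card ≤ E.card := Finset.card_le_card hME
    rw [mul_assoc, ← pow_add]
    congr 2
    omega
  have step3 : ∑ A ∈ M.powerset, p ^ A.card * r ^ (M.card - A.card) = 1 := by
    have hpr : p + r = 1 := by rw [hp]; ring
    have h := Finset.prod_add (fun _ : V × V => p) (fun _ : V × V => r) M
    simp only [Finset.prod_const, hpr, one_pow] at h
    rw [show (1:ℝ) = ∑ A ∈ M.powerset, p ^ A.card * r ^ (M \ A).card from h]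
    apply Finset.sum_congr rfl; intro A hA
    congr 1
    rw [Finset.card_sdiff_of_subset (Finset.mem_powerset.1 hA)]
  rw [step1, step2, step3, one_mul]
  have : E.card - M.card = (E.filter (fun e => σ e.1 ≠ σ e.2)).card := by omega
  rw [this, hr, ← Real.exp_nat_mul]
  ring_nf

lemma esMeasure_fst (σ : V → Fin q) :
    ∑ A : Finset (V × V), esMeasure E q β (σ, A) = pottsMeasure E q β σ := by
  unfold esMeasure pottsMeasure
  rw [← Finset.sum_div]
  congr 1
  · exact esWeight_marginal E q β σ
  · rw [Fintype.sum_prod_type]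
    exact Finset.sum_congr rfl fun τ _ => esWeight_marginal E q β τ

end App


section Prod
variable {S T : Type*} [Fintype S] [Fintype T] (ν : S × T → ℝ) (f : S → ℝ)

lemma sum_fst_fiber (h : S → ℝ) (σ : S) :
    (∑ y : S × T, if y.1 = σ then ν y * h y.1 else 0) = ∑ A : T, ν (σ, A) * h σ := by
  rw [Fintype.sum_prod_type]
  rw [Finset.sum_eq_single σ]
  · simp
  · intro ρ _ hρ; apply Finset.sum_eq_zero; intro A _; simp [hρ]
  · simp

lemma sum_fst_fiber' (G : S × T → ℝ) (σ : S) :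
    (∑ y : S × T, if y.1 = σ then ν y * G y else 0) = ∑ A : T, ν (σ, A) * G (σ, A) := by
  rw [Fintype.sum_prod_type]
  rw [Finset.sum_eq_single σ]
  · simp
  · intro ρ _ hρ; apply Finset.sum_eq_zero; intro A _; simp [hρ]
  · simp

lemma sum_fst_fiber_mass (σ : S) :
    (∑ y : S × T, if y.1 = σ then ν y else 0) = ∑ A : T, ν (σ, A) := by
  have := sum_fst_fiber (T := T) ν (fun _ => 1) σ
  simpa using this

lemma sum_snd_fiber (h : S → ℝ) (A : T) :
    (∑ y : S × T, if y.2 = A then ν y * h y.1 else 0) = ∑ τ : S, ν (τ, A) * h τ := by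
  rw [Fintype.sum_prod_type]
  apply Finset.sum_congr rfl; intro τ _
  rw [Finset.sum_eq_single A] <;> simp +contextual

lemma sum_snd_fiber_mass (A : T) :
    (∑ y : S × T, if y.2 = A then ν y else 0) = ∑ τ : S, ν (τ, A) := by
  have := sum_snd_fiber (S := S) ν (fun _ => 1) A
  simpa using this

lemma ent_comp_fst :
    ent ν (fun z => f z.1) = ent (fun σ => ∑ A : T, ν (σ, A)) f := by
  unfold ent
  rw [Fintype.sum_prod_type, Fintype.sum_prod_type]
  have e1 : ∀ σ : S, ∑ A : T, ν (σ, A) * f σ * Real.log (f σ)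
      = (∑ A : T, ν (σ, A)) * f σ * Real.log (f σ) := by
    intro σ; rw [Finset.sum_mul, Finset.sum_mul]
  have e2 : ∀ σ : S, ∑ A : T, ν (σ, A) * f σ = (∑ A : T, ν (σ, A)) * f σ := by
    intro σ; rw [Finset.sum_mul]
  rw [Finset.sum_congr rfl fun σ _ => e1 σ, Finset.sum_congr rfl fun σ _ => e2 σ]

lemma avgCondEnt_fst_comp (hν : ∀ z, 0 ≤ ν z) :
    avgCondEnt ν Prod.fst (fun z => f z.1) = 0 := by
  unfold avgCondEnt
  apply Finset.sum_eq_zero; intro z _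
  rcases eq_or_lt_of_le (hν z) with h | h
  · rw [← h]; ring
  · have hm : condMean ν Prod.fst (fun z => f z.1) z = f z.1 := by
      unfold condMean
      have hD : 0 < ∑ y : S × T, if y.1 = z.1 then ν y else 0 := by
        refine lt_of_lt_of_le h ?_
        have := Finset.single_le_sum
          (f := fun y : S × T => if y.1 = z.1 then ν y else 0)
          (fun y _ => by beta_reduce; split_ifs; exacts [hν y, le_refl 0])
          (Finset.mem_univ z)
        simpa using this
      rw [sum_fst_fiber (T := T) ν f z.1, sum_fst_fiber_mass ν z.1]
      rw [sum_fst_fiber_mass ν z.1] at hD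
      rw [← Finset.sum_mul]
      field_simp
    rw [hm]
    simp
end Prod


section Prod2
variable {S T : Type*} [Fintype S] [Fintype T] (ν : S × T → ℝ)

lemma condMean_fst_eval (G : S × T → ℝ) (x : S × T) :
    condMean ν Prod.fst G x =
      (∑ A : T, ν (x.1, A) * G (x.1, A)) / (∑ A : T, ν (x.1, A)) := by
  unfold condMean
  rw [sum_fst_fiber' ν G x.1, sum_fst_fiber_mass ν x.1]

lemma condMean_snd_eval (f : S → ℝ) (x : S × T) :
    condMean ν Prod.snd (fun z => f z.1) x =
      (∑ τ : S, ν (τ, x.2) * f τ) / (∑ τ : S, ν (τ, x.2)) := by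
  unfold condMean
  rw [sum_snd_fiber ν f x.2, sum_snd_fiber_mass ν x.2]

end Prod2


lemma sw_eq_condMean {V : Type*} [Fintype V] [DecidableEq V]
    (E : Finset (V × V)) (q : ℕ) (β : ℝ) (f : (V → Fin q) → ℝ)
    (σ : V → Fin q) (A₀ : Finset (V × V)) :
    matMulVec (swMatrix E q β) f σ =
      condMean (esMeasure E q β) Prod.fst
        (condMean (esMeasure E q β) Prod.snd (fun z => f z.1)) (σ, A₀) := by
  set ν := esMeasure E q β with hν
  rw [condMean_fst_eval]
  have hGeval : ∀ A : Finset (V × V),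
      condMean ν Prod.snd (fun z => f z.1) (((σ, A₀) : (V → Fin q) × Finset (V × V)).1, A) =
        (∑ τ : V → Fin q, ν (τ, A) * f τ) / (∑ τ : V → Fin q, ν (τ, A)) := by
    intro A
    rw [condMean_snd_eval]
  rw [Finset.sum_congr rfl fun A _ => by rw [hGeval A]]
  have lhs1 : matMulVec (swMatrix E q β) f σ =
      ∑ A : Finset (V × V), ∑ τ : V → Fin q,
        (ν (σ, A) / ∑ B : Finset (V × V), ν (σ, B)) *
        (ν (τ, A) / ∑ ρ : V → Fin q, ν (ρ, A)) * f τ := by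
    unfold matMulVec swMatrix
    rw [Finset.sum_comm]
    apply Finset.sum_congr rfl; intro τ _
    rw [Finset.sum_mul]
  rw [lhs1, Finset.sum_div]
  apply Finset.sum_congr rfl; intro A _
  show ∑ τ : V → Fin q,
      (ν (σ, A) / ∑ B : Finset (V × V), ν (σ, B)) *
        (ν (τ, A) / ∑ ρ : V → Fin q, ν (ρ, A)) * f τ =
      ν (σ, A) * ((∑ τ : V → Fin q, ν (τ, A) * f τ) / ∑ τ : V → Fin q, ν (τ, A)) /
        ∑ B : Finset (V × V), ν (σ, B)
  rw [Finset.sum_div, Finset.mul_sum, Finset.sum_div]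
  apply Finset.sum_congr rfl; intro τ _
  ring


/-- Spin/edge factorization of entropy for the Edwards–Sokal measure, with constant `C`,
implies entropy contraction at rate `1 - 1/C` for the Swendsen–Wang dynamics. -/
theorem stmt13 {V : Type*} [Fintype V] [DecidableEq V]
    (E : Finset (V × V)) (q : ℕ) (hq : 2 ≤ q) (β : ℝ) (hβ : 0 < β)
    (C : ℝ) (hC : 1 ≤ C)
    (hfact : ∀ f : ((V → Fin q) × Finset (V × V)) → ℝ, (∀ z, 0 ≤ f z) →
      ent (esMeasure E q β) f ≤
        C * (avgCondEnt (esMeasure E q β) Prod.fst f +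
             avgCondEnt (esMeasure E q β) Prod.snd f)) :
    ∀ f : (V → Fin q) → ℝ, (∀ σ, 0 ≤ f σ) →
      ent (pottsMeasure E q β) (matMulVec (swMatrix E q β) f) ≤
        (1 - 1 / C) * ent (pottsMeasure E q β) f := by
  intro f hf
  set ν := esMeasure E q β with hνdef
  have hν0 : ∀ z, 0 ≤ ν z := esMeasure_nonneg E q β hβ
  set F : ((V → Fin q) × Finset (V × V)) → ℝ := fun z => f z.1 with hFdef
  have hF0 : ∀ z, 0 ≤ F z := fun z => hf z.1
  have hmargfun : (fun σ => ∑ A : Finset (V × V), ν (σ, A)) = pottsMeasure E q β :=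
    funext (esMeasure_fst E q β)
  have h1 : ent ν F = ent (pottsMeasure E q β) f := by
    rw [hFdef, ent_comp_fst ν f, hmargfun]
  have h2 : avgCondEnt ν Prod.fst F = 0 := avgCondEnt_fst_comp ν f hν0
  set G := condMean ν Prod.snd F with hGdef
  have hG0 : ∀ z, 0 ≤ G z := condMean_nonneg ν Prod.snd F hν0 hF0
  have h3 : ent ν F = avgCondEnt ν Prod.snd F + ent ν G := ent_chain ν Prod.snd F hν0
  have h4 : ent (pottsMeasure E q β) f ≤ C * avgCondEnt ν Prod.snd F := by
    have := hfact F hF0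
    rw [h2, zero_add, h1] at this
    exact this
  have h5 : ent (pottsMeasure E q β) (matMulVec (swMatrix E q β) f) ≤ ent ν G := by
    have e0 : ent ν (fun z : (V → Fin q) × Finset (V × V) => matMulVec (swMatrix E q β) f z.1)
        = ent (pottsMeasure E q β) (matMulVec (swMatrix E q β) f) := by
      rw [ent_comp_fst, hmargfun]
    rw [← e0]
    have e2 : (fun z : (V → Fin q) × Finset (V × V) => matMulVec (swMatrix E q β) f z.1)
        = condMean ν Prod.fst G := by
      funext z
      have h := sw_eq_condMean E q β f z.1 z.2
      rw [Prod.mk.eta] at h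
      rw [hGdef, hFdef, hνdef]
      exact h
    rw [e2]
    exact ent_condMean_le ν Prod.fst G hν0 hG0
  have hC0 : (0:ℝ) < C := lt_of_lt_of_le one_pos hC
  have hX : ent (pottsMeasure E q β) f / C ≤ avgCondEnt ν Prod.snd F :=
    (div_le_iff₀ hC0).2 (by linarith [h4])
  have hEG : ent ν G = ent (pottsMeasure E q β) f - avgCondEnt ν Prod.snd F := by
    rw [← h1]; linarith [h3]
  have hfinal : (1 - 1 / C) * ent (pottsMeasure E q β) f
      = ent (pottsMeasure E q β) f - ent (pottsMeasure E q β) f / C := by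
    field_simp
  linarith
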